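/- arXiv:1205.4382 — 2 statements merged into one kernel-verified Lean document; each statement's English description precedes it below -/
import Mathlib

section
/- Let G = (V,E) be a finite simple graph and p : V → ℝ² a map in general position. Suppose that deleting any single edge of G does not increase the number of connected components, but deleting some two distinct edges e and f increases the number of connected components by 1. Then deleting these two edges does not affect the number of stress: s_p(E \ {e,f}) = s_p(E). -/
noncomputable section

open Classical in
/-- The edge vector of the pair `(i, j)` under the realization `p`: the function `V → ℝ × ℝ`
whose value is `p i - p j` at `i`, `p j - p i` at `j`, and `0` elsewhere. -/
def edgeVec {V : Type*} (p : V → ℝ × ℝ) (i j : V) : V → ℝ × ℝ :=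
  fun v => if v = i then p i - p j else if v = j then p j - p i else 0

/-- The set of edge vectors of a set `F` of (potential) edges under the realization `p`. -/
def edgeVecs {V : Type*} (p : V → ℝ × ℝ) (F : Set (Sym2 V)) : Set (V → ℝ × ℝ) :=
  {x | ∃ i j, s(i, j) ∈ F ∧ x = edgeVec p i j}

/-- The rank of the edge vectors of `F` under the realization `p`. -/
def rankOf {V : Type*} (p : V → ℝ × ℝ) (F : Set (Sym2 V)) : ℕ :=
  Module.finrank ℝ (Submodule.span ℝ (edgeVecs p F))

/-- The generic rank of a set of edges: the maximum over all realizations `p` of the rank. -/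
def genRankSet {V : Type*} (F : Set (Sym2 V)) : ℕ :=
  ⨆ p : V → ℝ × ℝ, rankOf p F

/-- The generic rank `r(G)` of a graph. -/
def genRank {V : Type*} (G : SimpleGraph V) : ℕ := genRankSet G.edgeSet

/-- The stress number `s_p(F)` of a set of edges under the realization `p`
(the dimension of the space of resolvable stresses). -/
def stressNum {V : Type*} (p : V → ℝ × ℝ) (F : Set (Sym2 V)) : ℕ :=
  F.ncard - rankOf p F

/-- The generic stress number `s(F)` of a set of edges. -/
def genStressSet {V : Type*} (F : Set (Sym2 V)) : ℕ := F.ncard - genRankSet F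

/-- The generic stress number `s(G)` of a graph. -/
def genStress {V : Type*} (G : SimpleGraph V) : ℕ := G.edgeSet.ncard - genRank G

/-- A planar configuration is in general position if it is injective and no three distinct
vertices have collinear images. -/
def GeneralPosition {V : Type*} (p : V → ℝ × ℝ) : Prop :=
  Function.Injective p ∧
    ∀ i j k : V, i ≠ j → j ≠ k → i ≠ k →
      ¬ Collinear ℝ ({p i, p j, p k} : Set (ℝ × ℝ))

/-- `W_U`: the subspace of functions `V → ℝ × ℝ` vanishing at every vertex outside `U`. -/
def vanishOn {V : Type*} (U : Set V) : Submodule ℝ (V → ℝ × ℝ) where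
  carrier := {f | ∀ v ∉ U, f v = 0}
  zero_mem' := fun v _ => rfl
  add_mem' := by
    intro a b ha hb v hv
    simp [Pi.add_apply, ha v hv, hb v hv]
  smul_mem' := by
    intro c f hf v hv
    simp [Pi.smul_apply, hf v hv]

end

open SimpleGraph in
lemma del_reach_of_reach {V : Type*} {K : SimpleGraph V} {x y : V}
    (hxy : (K.deleteEdges {s(x,y)}).Reachable x y) {u v : V} (h : K.Reachable u v) :
    (K.deleteEdges {s(x,y)}).Reachable u v := by
  obtain ⟨w⟩ := h
  induction w with
  | nil => exact Reachable.refl _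
  | @cons u m v had q ih =>
    by_cases hc : s(u, m) = s(x, y)
    · rcases Sym2.eq_iff.mp hc with ⟨rfl, rfl⟩ | ⟨rfl, rfl⟩
      · exact hxy.trans ih
      · exact hxy.symm.trans ih
    · exact (Adj.reachable
        (by rw [SimpleGraph.deleteEdges_adj]; exact ⟨had, by simpa using hc⟩)).trans ih

open SimpleGraph in
lemma card_cc_eq_of_reach {V : Type*} [Fintype V] {K : SimpleGraph V} {x y : V}
    (hxy : (K.deleteEdges {s(x,y)}).Reachable x y) :
    Nat.card (K.deleteEdges {s(x,y)}).ConnectedComponent = Nat.card K.ConnectedComponent := by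
  apply Nat.card_eq_of_bijective
    (ConnectedComponent.map (Hom.ofLE (SimpleGraph.deleteEdges_le _)))
  constructor
  · intro C D
    refine ConnectedComponent.ind₂ (fun u v h => ?_) C D
    simp only [ConnectedComponent.map_mk] at h
    have : K.Reachable u v := ConnectedComponent.eq.mp h
    exact ConnectedComponent.eq.mpr (del_reach_of_reach hxy this)
  · intro C
    refine ConnectedComponent.ind (fun v => ?_) C
    exact ⟨(K.deleteEdges {s(x,y)}).connectedComponentMk v, rfl⟩

open SimpleGraph in
lemma reach_of_card_cc_eq {V : Type*} [Fintype V] {K : SimpleGraph V} {x y : V} (hadj : K.Adj x y)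
    (h : Nat.card (K.deleteEdges {s(x,y)}).ConnectedComponent = Nat.card K.ConnectedComponent) :
    (K.deleteEdges {s(x,y)}).Reachable x y := by
  by_contra hr
  set φ := (ConnectedComponent.map (Hom.ofLE
    (SimpleGraph.deleteEdges_le (G := K) {s(x,y)}))) with hφ
  have hsurj : Function.Surjective φ := by
    intro C
    refine ConnectedComponent.ind (fun v => ?_) C
    exact ⟨(K.deleteEdges {s(x,y)}).connectedComponentMk v, rfl⟩
  have hbij : Function.Bijective φ := (Nat.bijective_iff_surjective_and_card φ).mpr ⟨hsurj, h⟩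
  have : φ ((K.deleteEdges {s(x,y)}).connectedComponentMk x)
      = φ ((K.deleteEdges {s(x,y)}).connectedComponentMk y) := by
    simp only [hφ, ConnectedComponent.map_mk]
    exact ConnectedComponent.eq.mpr hadj.reachable
  exact hr (ConnectedComponent.eq.mp (hbij.1 this))

open SimpleGraph in
lemma reach_cases {V : Type*} {K : SimpleGraph V} {x y u v : V} (h : K.Reachable u v) :
    (K.deleteEdges {s(x,y)}).Reachable u v ∨
      ((K.deleteEdges {s(x,y)}).Reachable u x ∨ (K.deleteEdges {s(x,y)}).Reachable u y) ∧
      ((K.deleteEdges {s(x,y)}).Reachable v x ∨ (K.deleteEdges {s(x,y)}).Reachable v y) := by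
  obtain ⟨w⟩ := h
  induction w with
  | nil => exact Or.inl (Reachable.refl _)
  | @cons u m v had q ih =>
    by_cases hc : s(u, m) = s(x, y)
    · right
      have hu : (K.deleteEdges {s(x,y)}).Reachable u x ∨ (K.deleteEdges {s(x,y)}).Reachable u y := by
        rcases Sym2.eq_iff.mp hc with ⟨rfl, rfl⟩ | ⟨rfl, rfl⟩
        · exact Or.inl (Reachable.refl _)
        · exact Or.inr (Reachable.refl _)
      have hm : (K.deleteEdges {s(x,y)}).Reachable m x ∨ (K.deleteEdges {s(x,y)}).Reachable m y := by
        rcases Sym2.eq_iff.mp hc with ⟨rfl, rfl⟩ | ⟨rfl, rfl⟩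
        · exact Or.inr (Reachable.refl _)
        · exact Or.inl (Reachable.refl _)
      refine ⟨hu, ?_⟩
      rcases ih with hvr | ⟨_, hv⟩
      · exact hm.imp (fun h' => hvr.symm.trans h') (fun h' => hvr.symm.trans h')
      · exact hv
    · have hadj' : (K.deleteEdges {s(x,y)}).Adj u m := by
        rw [SimpleGraph.deleteEdges_adj]; exact ⟨had, by simpa using hc⟩
      rcases ih with hvr | ⟨hmx, hv⟩
      · exact Or.inl (hadj'.reachable.trans hvr)
      · exact Or.inr ⟨hmx.imp (fun h' => hadj'.reachable.trans h')
          (fun h' => hadj'.reachable.trans h'), hv⟩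

lemma det_ne_of_gp {V : Type*} {p : V → ℝ × ℝ}
    (hinj : Function.Injective p)
    (hcol : ∀ i j k : V, i ≠ j → j ≠ k → i ≠ k →
      ¬ Collinear ℝ ({p i, p j, p k} : Set (ℝ × ℝ)))
    {i j k : V} (hij : i ≠ j) (hjk : j ≠ k) (hik : i ≠ k) :
    ((p j).1 - (p i).1) * ((p k).2 - (p i).2)
      - ((p j).2 - (p i).2) * ((p k).1 - (p i).1) ≠ 0 := by
  intro h0
  apply hcol i j k hij hjk hik
  rw [collinear_iff_exists_forall_eq_smul_vadd]
  refine ⟨p i, p j - p i, ?_⟩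
  have hne : p j - p i ≠ 0 := sub_ne_zero.mpr (fun h => hij (hinj h).symm)
  have hcomp : (p j).1 - (p i).1 ≠ 0 ∨ (p j).2 - (p i).2 ≠ 0 := by
    by_contra hc
    push_neg at hc
    apply hne
    ext
    · simpa [sub_eq_zero] using hc.1
    · simpa [sub_eq_zero] using hc.2
  intro q hq
  rcases hq with rfl | rfl | rfl
  · exact ⟨0, by simp⟩
  · exact ⟨1, by ext <;> simp [Prod.fst_add, Prod.snd_add]⟩
  · rcases hcomp with h1 | h2
    · refine ⟨((p k).1 - (p i).1) / ((p j).1 - (p i).1), ?_⟩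
      have : p k = (((p k).1 - (p i).1) / ((p j).1 - (p i).1)) • (p j - p i) + p i := by
        ext
        · show (p k).1 = _ * ((p j).1 - (p i).1) + (p i).1
          field_simp
          ring
        · show (p k).2 = _ * ((p j).2 - (p i).2) + (p i).2
          field_simp
          linear_combination h0
      simpa using this
    · refine ⟨((p k).2 - (p i).2) / ((p j).2 - (p i).2), ?_⟩
      have : p k = (((p k).2 - (p i).2) / ((p j).2 - (p i).2)) • (p j - p i) + p i := by
        ext
        · show (p k).1 = _ * ((p j).1 - (p i).1) + (p i).1
          field_simp
          linear_combination -h0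
        · show (p k).2 = _ * ((p j).2 - (p i).2) + (p i).2
          field_simp
          ring
      simpa using this

/-- The linear functional used to detect the cut. -/
noncomputable def sumOn {V : Type*} (p : V → ℝ × ℝ) (U : Finset V) :
    (V → ℝ × ℝ) →ₗ[ℝ] ℝ × ℝ × ℝ where
  toFun g := (∑ v ∈ U, (g v).1, ∑ v ∈ U, (g v).2,
    ∑ v ∈ U, ((p v).1 * (g v).2 - (p v).2 * (g v).1))
  map_add' g h := by
    ext <;>
      · simp only [Pi.add_apply, Prod.fst_add, Prod.snd_add]
        rw [← Finset.sum_add_distrib]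
        try exact Finset.sum_congr rfl fun v _ => by ring
  map_smul' c g := by
    ext <;>
      · simp only [Pi.smul_apply, Prod.smul_fst, Prod.smul_snd, smul_eq_mul, RingHom.id_apply]
        rw [Finset.mul_sum]
        try exact Finset.sum_congr rfl fun v _ => by ring

section EdgeVecLemmas

variable {V : Type*}

lemma sumOn_apply (p : V → ℝ × ℝ) (U : Finset V) (g : V → ℝ × ℝ) :
    sumOn p U g = (∑ v ∈ U, (g v).1, ∑ v ∈ U, (g v).2,
      ∑ v ∈ U, ((p v).1 * (g v).2 - (p v).2 * (g v).1)) := rfl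

lemma edgeVec_self (p : V → ℝ × ℝ) (i : V) : edgeVec p i i = 0 := by
  funext v
  simp [edgeVec]

lemma edgeVec_apply_ne (p : V → ℝ × ℝ) {i j v : V} (hvi : v ≠ i) (hvj : v ≠ j) :
    edgeVec p i j v = 0 := by
  simp [edgeVec, hvi, hvj]

lemma edgeVec_apply_fst (p : V → ℝ × ℝ) (i j : V) : edgeVec p i j i = p i - p j := by
  simp [edgeVec]

lemma edgeVec_apply_snd (p : V → ℝ × ℝ) {i j : V} (h : j ≠ i) : edgeVec p i j j = p j - p i := by
  simp [edgeVec, h]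

lemma edgeVec_comm (p : V → ℝ × ℝ) (i j : V) : edgeVec p i j = edgeVec p j i := by
  funext v
  by_cases hij : i = j
  · subst hij; rfl
  · by_cases hvi : v = i
    · subst hvi
      rw [edgeVec_apply_fst, edgeVec_apply_snd p hij]
    · by_cases hvj : v = j
      · subst hvj
        rw [edgeVec_apply_fst, edgeVec_apply_snd p (fun h => hij h.symm)]
      · rw [edgeVec_apply_ne p hvi hvj, edgeVec_apply_ne p hvj hvi]

lemma edgeVec_ne_zero (p : V → ℝ × ℝ) {i j : V} (hinj : Function.Injective p) (hij : i ≠ j) :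
    edgeVec p i j ≠ 0 := by
  intro h
  have := congrFun h i
  rw [edgeVec_apply_fst] at this
  exact hij (hinj (sub_eq_zero.mp this))

lemma sum_support_pair {U : Finset V} {i j : V} (hij : i ≠ j) (hi : i ∈ U) (hj : j ∈ U)
    (F : V → ℝ) (hF : ∀ v, v ≠ i → v ≠ j → F v = 0) :
    ∑ v ∈ U, F v = F i + F j := by
  classical
  have hsub : ({i, j} : Finset V) ⊆ U := by
    intro x hx
    rcases Finset.mem_insert.mp hx with rfl | hx
    · exact hi
    · rw [Finset.mem_singleton.mp hx]; exact hj
  rw [← Finset.sum_subset hsub (fun x _ hx => hF x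
      (fun h' => hx (by simp [h'])) (fun h' => hx (by simp [h'])))]
  exact Finset.sum_pair hij

lemma sumOn_edgeVec_zero (p : V → ℝ × ℝ) (U : Finset V) {i j : V}
    (h : i ∈ U ↔ j ∈ U) : sumOn p U (edgeVec p i j) = 0 := by
  by_cases hij : i = j
  · subst hij; rw [edgeVec_self]; exact map_zero _
  · rw [sumOn_apply]
    by_cases hiU : i ∈ U
    · have hjU : j ∈ U := h.mp hiU
      have e1 := edgeVec_apply_fst p i j
      have e2 := edgeVec_apply_snd p (fun h' => hij h'.symm)
      refine Prod.ext ?_ (Prod.ext ?_ ?_) <;> simp only []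
      · rw [sum_support_pair hij hiU hjU _
          (fun v hvi hvj => by rw [edgeVec_apply_ne p hvi hvj]; rfl), e1, e2]
        show ((p i - p j).1 + (p j - p i).1) = 0
        simp
      · rw [sum_support_pair hij hiU hjU _
          (fun v hvi hvj => by rw [edgeVec_apply_ne p hvi hvj]; rfl), e1, e2]
        show ((p i - p j).2 + (p j - p i).2) = 0
        simp
      · rw [sum_support_pair hij hiU hjU _
          (fun v hvi hvj => by rw [edgeVec_apply_ne p hvi hvj]; simp), e1, e2]
        show (p i).1 * (p i - p j).2 - (p i).2 * (p i - p j).1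
          + ((p j).1 * (p j - p i).2 - (p j).2 * (p j - p i).1) = 0
        simp only [Prod.fst_sub, Prod.snd_sub]
        ring
    · have hjU : j ∉ U := fun hj => hiU (h.mpr hj)
      have hz : ∀ v ∈ U, edgeVec p i j v = 0 := fun v hv =>
        edgeVec_apply_ne p (fun h' => hiU (h' ▸ hv)) (fun h' => hjU (h' ▸ hv))
      refine Prod.ext ?_ (Prod.ext ?_ ?_) <;> simp only [] <;>
        · apply Finset.sum_eq_zero
          intro v hv
          rw [hz v hv] <;> simp

lemma sumOn_edgeVec_cross (p : V → ℝ × ℝ) {U : Finset V} {i j : V}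
    (hij : i ≠ j) (hi : i ∈ U) (hj : j ∉ U) :
    sumOn p U (edgeVec p i j) = ((p i).1 - (p j).1, (p i).2 - (p j).2,
      (p i).1 * ((p i).2 - (p j).2) - (p i).2 * ((p i).1 - (p j).1)) := by
  have hz : ∀ v ∈ U, v ≠ i → edgeVec p i j v = 0 := fun v hv hvi =>
    edgeVec_apply_ne p hvi (fun h' => hj (h' ▸ hv))
  have e1 := edgeVec_apply_fst p i j
  rw [sumOn_apply]
  refine Prod.ext ?_ (Prod.ext ?_ ?_) <;> simp only []
  · rw [Finset.sum_eq_single_of_mem i hi (fun v hv hvi => by rw [hz v hv hvi]; rfl), e1]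
    rfl
  · rw [Finset.sum_eq_single_of_mem i hi (fun v hv hvi => by rw [hz v hv hvi]; rfl), e1]
    rfl
  · rw [Finset.sum_eq_single_of_mem i hi (fun v hv hvi => by rw [hz v hv hvi]; simp), e1]
    rfl

end EdgeVecLemmas


set_option maxHeartbeats 1000000 in
set_option synthInstance.maxHeartbeats 400000 in
open SimpleGraph Module in
/-- If deleting any single edge of `G` does not increase the number of connected components,
but deleting the two distinct edges `e` and `f` increases the number of connected components
by 1, then deleting these two edges does not affect the number of stress. -/
theorem stressNum_delete_two_edges {V : Type*} [Fintype V] (G : SimpleGraph V)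
    (p : V → ℝ × ℝ) (hp : GeneralPosition p)
    (hone : ∀ g ∈ G.edgeSet, Nat.card (G.deleteEdges {g}).ConnectedComponent
      = Nat.card G.ConnectedComponent)
    (e f : Sym2 V) (he : e ∈ G.edgeSet) (hf : f ∈ G.edgeSet) (hef : e ≠ f)
    (htwo : Nat.card (G.deleteEdges {e, f}).ConnectedComponent
      = Nat.card G.ConnectedComponent + 1) :
    stressNum p (G.edgeSet \ {e, f}) = stressNum p G.edgeSet := by
  classical
  obtain ⟨hinj, hcol⟩ := hp
  revert he hf hef htwo
  refine Sym2.inductionOn₂ e f ?_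
  intro a b c d he hf hef htwo
  have hab : G.Adj a b := (G.mem_edgeSet).mp he
  have hcd : G.Adj c d := (G.mem_edgeSet).mp hf
  have hne_ab : a ≠ b := hab.ne
  have hne_cd : c ≠ d := hcd.ne
  set H := G.deleteEdges {s(a,b), s(c,d)} with hH
  have hH1 : H = (G.deleteEdges {s(c,d)}).deleteEdges {s(a,b)} := by
    rw [hH, SimpleGraph.deleteEdges_deleteEdges, Set.singleton_union, Set.pair_comm]
  have hH2 : H = (G.deleteEdges {s(a,b)}).deleteEdges {s(c,d)} := by
    rw [hH, SimpleGraph.deleteEdges_deleteEdges, Set.singleton_union]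
  have hnab : ¬ H.Reachable a b := by
    intro hr
    rw [hH1] at hr
    have h1 := card_cc_eq_of_reach hr
    rw [← hH1] at h1
    rw [h1, hone _ hf] at htwo
    omega
  have hncd : ¬ H.Reachable c d := by
    intro hr
    rw [hH2] at hr
    have h1 := card_cc_eq_of_reach hr
    rw [← hH2] at h1
    rw [h1, hone _ he] at htwo
    omega
  have hKreach : (G.deleteEdges {s(c,d)}).Reachable c d :=
    reach_of_card_cc_eq hcd (hone _ hf)
  have hcases := reach_cases (x := a) (y := b) hKreach
  rw [← hH1] at hcases
  have hkey : ∃ c' d', s(c', d') = s(c, d) ∧ H.Reachable a c' ∧ ¬ H.Reachable a d' := by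
    rcases hcases with hr | ⟨hc, hd⟩
    · exact absurd hr hncd
    · rcases hc with hca | hcb
      · exact ⟨c, d, rfl, hca.symm, fun had => hncd (hca.trans had)⟩
      · refine ⟨d, c, Sym2.eq_swap, ?_, fun hac => hnab (hac.trans hcb)⟩
        rcases hd with hda | hdb
        · exact hda.symm
        · exact absurd (hcb.trans hdb.symm) hncd
  obtain ⟨c', d', hc'd', hac', hnad'⟩ := hkey
  have hcd' : c' ≠ d' := by rintro rfl; exact hnad' hac'
  have hfe' : s(c', d') ≠ s(a, b) := by rw [hc'd']; exact hef.symm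
  have hne1 : ¬ (c' = a ∧ d' = b) := fun ⟨h1, h2⟩ => hfe' (by rw [h1, h2])
  have hne2 : ¬ (c' = b ∧ d' = a) := fun ⟨h1, h2⟩ => hfe' (by rw [h1, h2]; exact Sym2.eq_swap)
  -- the cut
  set Uset : Finset V := (Set.toFinite {v : V | H.Reachable a v}).toFinset with hUset
  have hUmem : ∀ v, v ∈ Uset ↔ H.Reachable a v := fun v => Set.Finite.mem_toFinset _
  have hUa : a ∈ Uset := (hUmem a).mpr (Reachable.refl a)
  have hUb : b ∉ Uset := fun h => hnab ((hUmem b).mp h)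
  have hUc : c' ∈ Uset := (hUmem _).mpr hac'
  have hUd : d' ∉ Uset := fun h => hnad' ((hUmem _).mp h)
  have hUedge : ∀ i j : V, s(i,j) ∈ G.edgeSet \ {s(a,b), s(c,d)} → (i ∈ Uset ↔ j ∈ Uset) := by
    intro i j hij
    have hadj : H.Adj i j := by
      rw [← SimpleGraph.mem_edgeSet, hH, SimpleGraph.edgeSet_deleteEdges]
      exact hij
    constructor
    · intro hi; exact (hUmem j).mpr (((hUmem i).mp hi).trans hadj.reachable)
    · intro hj; exact (hUmem i).mpr (((hUmem j).mp hj).trans hadj.symm.reachable)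
  -- linear algebra setup
  set A := edgeVecs p (G.edgeSet \ {s(a,b), s(c,d)}) with hA
  set B := edgeVecs p G.edgeSet with hB
  set ve := edgeVec p a b with hve
  set vf := edgeVec p c' d' with hvf
  have hveB : ve ∈ B := ⟨a, b, he, rfl⟩
  have hvfB : vf ∈ B := ⟨c', d', by rw [hc'd']; exact hf, rfl⟩
  have hBeq : B = A ∪ {ve, vf} := by
    ext x
    constructor
    · rintro ⟨i, j, hijE, rfl⟩
      by_cases hmem : s(i,j) ∈ ({s(a,b), s(c,d)} : Set (Sym2 V))
      · right
        rcases hmem with h1 | h2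
        · left
          rcases Sym2.eq_iff.mp h1 with ⟨rfl, rfl⟩ | ⟨rfl, rfl⟩
          · rfl
          · exact edgeVec_comm p i j
        · right
          rw [Set.mem_singleton_iff] at h2 ⊢
          rcases Sym2.eq_iff.mp (h2.trans hc'd'.symm) with ⟨rfl, rfl⟩ | ⟨rfl, rfl⟩
          · rfl
          · exact edgeVec_comm p i j
      · exact Or.inl ⟨i, j, ⟨hijE, hmem⟩, rfl⟩
    · rintro (hx | hx)
      · obtain ⟨i, j, hij, rfl⟩ := hx
        exact ⟨i, j, hij.1, rfl⟩
      · rcases hx with rfl | hx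
        · exact hveB
        · rw [Set.mem_singleton_iff] at hx
          rw [hx]
          exact hvfB
  set S := Submodule.span ℝ A with hS
  set T := Submodule.span ℝ B with hT
  have hTS : T = S ⊔ Submodule.span ℝ ({ve, vf} : Set (V → ℝ × ℝ)) := by
    rw [hT, hBeq, Submodule.span_union]
  -- upper bound
  have hvene : ve ≠ 0 := edgeVec_ne_zero p hinj hne_ab
  have hvfne : vf ≠ 0 := edgeVec_ne_zero p hinj hcd'
  have hupper : finrank ℝ T ≤ finrank ℝ S + 2 := by
    rw [hTS]
    refine le_trans (Submodule.finrank_add_le_finrank_add_finrank _ _) ?_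
    have hsp : Submodule.span ℝ ({ve, vf} : Set (V → ℝ × ℝ))
        = (ℝ ∙ ve) ⊔ Submodule.span ℝ ({vf} : Set (V → ℝ × ℝ)) := Submodule.span_insert _ _
    have h2 : finrank ℝ (Submodule.span ℝ ({ve, vf} : Set (V → ℝ × ℝ))) ≤ 2 := by
      rw [hsp]
      refine le_trans (Submodule.finrank_add_le_finrank_add_finrank _ _) ?_
      rw [finrank_span_singleton hvene, finrank_span_singleton hvfne]
    omega
  -- lower bound
  set φ := sumOn p Uset with hφ
  set ψ := φ.domRestrict T with hψ
  have hSker : S ≤ LinearMap.ker φ := by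
    rw [hS, Submodule.span_le]
    rintro x ⟨i, j, hij, rfl⟩
    exact sumOn_edgeVec_zero p Uset (hUedge i j hij)
  have hw1 := sumOn_edgeVec_cross p hne_ab hUa hUb
  have hw2 := sumOn_edgeVec_cross p hcd' hUc hUd
  have hpc : p c' ≠ p d' := fun h => hcd' (hinj h)
  have hind : LinearIndependent ℝ ![φ ve, φ vf] := by
    rw [LinearIndependent.pair_iff]
    intro s t hst
    rw [hφ, hve, hvf, hw1, hw2] at hst
    simp only [Prod.smul_mk, Prod.mk_add_mk, Prod.mk_eq_zero, smul_eq_mul] at hst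
    obtain ⟨E1, E2, E3⟩ := hst
    have ht : t = 0 := by
      by_contra ht
      have hs : s ≠ 0 := by
        rintro rfl
        apply hpc
        have h1 : t * ((p c').1 - (p d').1) = 0 := by linear_combination E1
        have h2 : t * ((p c').2 - (p d').2) = 0 := by linear_combination E2
        have h1' := sub_eq_zero.mp ((mul_eq_zero.mp h1).resolve_left ht)
        have h2' := sub_eq_zero.mp ((mul_eq_zero.mp h2).resolve_left ht)
        exact Prod.ext h1' h2'
      have F1 : ((p a).1 - (p b).1) * ((p c').2 - (p d').2)
          - ((p a).2 - (p b).2) * ((p c').1 - (p d').1) = 0 := by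
        have h := mul_eq_zero.mp (show t * (((p a).1 - (p b).1) * ((p c').2 - (p d').2)
            - ((p a).2 - (p b).2) * ((p c').1 - (p d').1)) = 0 by
          linear_combination ((p a).1 - (p b).1) * E2 - ((p a).2 - (p b).2) * E1)
        exact h.resolve_left ht
      have F2 : ((p a).1 - (p b).1) * ((p a).2 - (p c').2)
          - ((p a).2 - (p b).2) * ((p a).1 - (p c').1) = 0 := by
        have h := mul_eq_zero.mp (show s * (((p a).1 - (p b).1) * ((p a).2 - (p c').2)
            - ((p a).2 - (p b).2) * ((p a).1 - (p c').1)) = 0 by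
          linear_combination (-1) * E3 + (p c').1 * E2 - (p c').2 * E1)
        exact h.resolve_left hs
      by_cases hc'a : c' = a
      · have hd'b : b ≠ d' := fun h => hne1 ⟨hc'a, h.symm⟩
        have hd'a : a ≠ d' := fun h => hcd' (hc'a.trans h)
        rw [hc'a] at F1
        exact det_ne_of_gp hinj hcol hne_ab hd'b hd'a (by linear_combination F1)
      · by_cases hc'b : c' = b
        · have hd'a : a ≠ d' := fun h => hne2 ⟨hc'b, h.symm⟩
          have hd'b : b ≠ d' := fun h => hcd' (hc'b.trans h)
          rw [hc'b] at F1
          exact det_ne_of_gp hinj hcol (Ne.symm hne_ab) hd'a hd'b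
            (by linear_combination -F1)
        · exact det_ne_of_gp hinj hcol hne_ab (fun h => hc'b h.symm) (fun h => hc'a h.symm)
            (by linear_combination F2)
    subst ht
    refine ⟨?_, rfl⟩
    have hpa : p a ≠ p b := fun h => hne_ab (hinj h)
    have hor : (p a).1 ≠ (p b).1 ∨ (p a).2 ≠ (p b).2 := by
      by_contra hcon
      push_neg at hcon
      exact hpa (Prod.ext hcon.1 hcon.2)
    rcases hor with h | h
    · have h1 : s * ((p a).1 - (p b).1) = 0 := by linear_combination E1
      exact (mul_eq_zero.mp h1).resolve_right (fun h' => h (sub_eq_zero.mp h'))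
    · have h2 : s * ((p a).2 - (p b).2) = 0 := by linear_combination E2
      exact (mul_eq_zero.mp h2).resolve_right (fun h' => h (sub_eq_zero.mp h'))
  have hveT : ve ∈ T := Submodule.subset_span hveB
  have hvfT : vf ∈ T := Submodule.subset_span hvfB
  have h2le : 2 ≤ finrank ℝ (LinearMap.range ψ) := by
    have hcardeq : finrank ℝ (Submodule.span ℝ (Set.range ![φ ve, φ vf])) = 2 := by
      rw [finrank_span_eq_card hind, Fintype.card_fin]
    rw [← hcardeq]
    apply Submodule.finrank_mono
    rw [Submodule.span_le]
    rintro x ⟨i, rfl⟩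
    fin_cases i
    · exact ⟨⟨ve, hveT⟩, rfl⟩
    · exact ⟨⟨vf, hvfT⟩, rfl⟩
  have hlower : finrank ℝ S + 2 ≤ finrank ℝ T := by
    have hrn := LinearMap.finrank_range_add_finrank_ker ψ
    have hST : S ≤ T := by
      rw [hS, hT, hBeq]
      exact Submodule.span_mono Set.subset_union_left
    have hSk : finrank ℝ S ≤ finrank ℝ (LinearMap.ker ψ) := by
      have heq : finrank ℝ ↥S = finrank ℝ ↥(Submodule.comap T.subtype S) :=
        (LinearEquiv.finrank_eq (Submodule.comapSubtypeEquivOfLe hST)).symm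
      rw [heq]
      apply Submodule.finrank_mono
      intro x hx
      rw [LinearMap.mem_ker]
      exact hSker hx
    omega
  have hrank : finrank ℝ T = finrank ℝ S + 2 := le_antisymm hupper hlower
  -- arithmetic
  have hpairsub : ({s(a,b), s(c,d)} : Set (Sym2 V)) ⊆ G.edgeSet := by
    intro x hx
    rcases hx with rfl | hx
    · exact he
    · rw [Set.mem_singleton_iff] at hx
      rw [hx]
      exact hf
  have hcard : (G.edgeSet \ {s(a,b), s(c,d)}).ncard = G.edgeSet.ncard - 2 := by
    rw [Set.ncard_diff hpairsub, Set.ncard_pair hef]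
  show (G.edgeSet \ {s(a,b), s(c,d)}).ncard - rankOf p (G.edgeSet \ {s(a,b), s(c,d)})
      = G.edgeSet.ncard - rankOf p G.edgeSet
  have hr1 : rankOf p (G.edgeSet \ {s(a,b), s(c,d)}) = finrank ℝ S := rfl
  have hr2 : rankOf p G.edgeSet = finrank ℝ T := rfl
  rw [hcard, hr1, hr2, hrank]
  omega
end

section
/- Let G = (V,E) be a finite simple graph with a vertex s of degree exactly 4 whose four incident edges are {s,i}, {s,j}, {s,k}, {s,l}, and suppose {i,j} ∉ E. Define G' = (V,E') with E' = (E ∪ {{i,j}}) \ {{s,i},{s,j},{s,k},{s,l}}. Then the generic stress numbers satisfy s(G) ≤ s(G') + 1. -/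
section AuxLemmas

open Module Submodule

variable {V : Type*} [Fintype V]

lemma edgeVec_smul_add (p c : V → ℝ × ℝ) (ε : ℝ) (a b : V) :
    edgeVec (p + ε • c) a b = edgeVec p a b + ε • edgeVec c a b := by
  funext v
  simp only [edgeVec, Pi.add_apply, Pi.smul_apply]
  split_ifs <;> module

lemma edgeVec_congr (p q : V → ℝ × ℝ) (a b : V) (hqa : q a = p a) (hqb : q b = p b) :
    edgeVec q a b = edgeVec p a b := by
  funext v
  simp only [edgeVec, hqa, hqb]

lemma edgeVec_swap (p : V → ℝ × ℝ) (a b : V) : edgeVec p b a = edgeVec p a b := by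
  funext v
  simp only [edgeVec]
  split_ifs <;> simp_all

lemma edgeVec_combo (p : V → ℝ × ℝ) (w i j : V) (hwi : w ≠ i) (hwj : w ≠ j) (hij : i ≠ j)
    (hpw : p w = p j + p j - p i) :
    edgeVec p i j = (2⁻¹ : ℝ) • edgeVec p w i - edgeVec p w j := by
  funext v
  simp only [edgeVec, Pi.sub_apply, Pi.smul_apply]
  by_cases h1 : v = w
  · subst h1
    rw [if_neg hwi, if_neg hwj, if_pos rfl, if_pos rfl, hpw]
    module
  · by_cases h2 : v = i
    · subst h2
      rw [if_pos rfl, if_neg h1, if_pos rfl, if_neg h1, if_neg hij, hpw]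
      module
    · by_cases h3 : v = j
      · subst h3
        rw [if_neg h2, if_pos rfl, if_neg h1, if_neg h2, if_neg h1, if_pos rfl, hpw]
        module
      · rw [if_neg h2, if_neg h3, if_neg h1, if_neg h2, if_neg h1, if_neg h3]
        module

lemma bddAbove_rankOf (F : Set (Sym2 V)) :
    BddAbove (Set.range fun p : V → ℝ × ℝ => rankOf p F) := by
  refine ⟨finrank ℝ (V → ℝ × ℝ), ?_⟩
  rintro _ ⟨p, rfl⟩
  exact Submodule.finrank_le _

lemma rankOf_le_genRankSet (p : V → ℝ × ℝ) (F : Set (Sym2 V)) :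
    rankOf p F ≤ genRankSet F :=
  le_ciSup (bddAbove_rankOf F) p

lemma exists_rankOf_eq_genRankSet (F : Set (Sym2 V)) :
    ∃ p : V → ℝ × ℝ, rankOf p F = genRankSet F := by
  have h := Nat.sSup_mem (Set.range_nonempty (fun p : V → ℝ × ℝ => rankOf p F))
    (bddAbove_rankOf F)
  obtain ⟨p, hp⟩ := h
  exact ⟨p, hp⟩

/-- The key construction: if `p` places `i`, `j`, `k` in non-degenerate position, then placing
`w` on the line through `p i` and `p j` and using the star edges at `w` gains two ranks. -/
lemma rank_key (F F' : Set (Sym2 V)) (w i j k : V) (p : V → ℝ × ℝ)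
    (hwi : w ≠ i) (hwj : w ≠ j) (hwk : w ≠ k) (hij : i ≠ j)
    (havoid : ∀ e ∈ F', w ∉ e)
    (hsub : ∀ e ∈ F', e ∈ F ∨ e = s(i, j))
    (hFwi : s(w, i) ∈ F) (hFwj : s(w, j) ∈ F) (hFwk : s(w, k) ∈ F)
    (hD : (p j - p i).1 * (p k - p i).2 - (p j - p i).2 * (p k - p i).1 ≠ 0) :
    rankOf p F' + 2 ≤ genRankSet F := by
  classical
  set x : ℝ × ℝ := p j + p j - p i with hx
  set q : V → ℝ × ℝ := Function.update p w x with hqdef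
  have hq : ∀ v, v ≠ w → q v = p v := fun v hv => Function.update_of_ne hv _ _
  have hqw : q w = x := Function.update_self _ _ _
  set W : Submodule ℝ (V → ℝ × ℝ) := span ℝ (edgeVecs q F) with hW
  set W' : Submodule ℝ (V → ℝ × ℝ) := span ℝ (edgeVecs q F') with hW'
  set B : Submodule ℝ (V → ℝ × ℝ) := span ℝ {edgeVec q w i, edgeVec q w k} with hB
  have hu1 : edgeVec q w i ∈ W := subset_span ⟨w, i, hFwi, rfl⟩
  have hu2 : edgeVec q w k ∈ W := subset_span ⟨w, k, hFwk, rfl⟩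
  have hu3 : edgeVec q w j ∈ W := subset_span ⟨w, j, hFwj, rfl⟩
  have hu1w : edgeVec q w i w = x - p i := by
    simp [edgeVec, hqw, hq i (Ne.symm hwi)]
  have hu2w : edgeVec q w k w = x - p k := by
    simp [edgeVec, hqw, hq k (Ne.symm hwk)]
  -- the basic algebraic non-degeneracy
  have haux : ∀ a b : ℝ, a • (x - p i) + b • (x - p k) = 0 → a = 0 ∧ b = 0 := by
    intro a b hab
    rw [hx] at hab
    have h1 : a * ((p j).1 + (p j).1 - (p i).1 - (p i).1)
        + b * ((p j).1 + (p j).1 - (p i).1 - (p k).1) = 0 := by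
      have := congrArg Prod.fst hab
      simpa [Prod.fst_add, Prod.fst_sub, mul_comm] using this
    have h2 : a * ((p j).2 + (p j).2 - (p i).2 - (p i).2)
        + b * ((p j).2 + (p j).2 - (p i).2 - (p k).2) = 0 := by
      have := congrArg Prod.snd hab
      simpa [Prod.snd_add, Prod.snd_sub, mul_comm] using this
    have hD' : (p j - p i).1 * (p k - p i).2 - (p j - p i).2 * (p k - p i).1 ≠ 0 := hD
    simp only [Prod.fst_sub, Prod.snd_sub] at hD'
    have hb : b * (((p j).1 - (p i).1) * ((p k).2 - (p i).2)
        - ((p j).2 - (p i).2) * ((p k).1 - (p i).1)) = 0 := by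
      linear_combination ((p j).2 - (p i).2) * h1 - ((p j).1 - (p i).1) * h2
    have hb0 : b = 0 := (mul_eq_zero.mp hb).resolve_right hD'
    subst hb0
    refine ⟨?_, rfl⟩
    have ha : a * (((p j).1 - (p i).1) * ((p k).2 - (p i).2)
        - ((p j).2 - (p i).2) * ((p k).1 - (p i).1)) = 0 := by
      linear_combination (((p k).2 - (p i).2) / 2) * h1 - (((p k).1 - (p i).1) / 2) * h2
    exact (mul_eq_zero.mp ha).resolve_right hD'
  -- everything in `W'` vanishes at `w`
  have hvan : ∀ f ∈ W', f w = 0 := by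
    have hle : W' ≤ vanishOn ({w}ᶜ : Set V) := by
      rw [hW', span_le]
      rintro f ⟨a, b, hab, rfl⟩
      have hmem := havoid _ hab
      rw [Sym2.mem_iff] at hmem
      push_neg at hmem
      intro v hv
      have hvw : v = w := by simpa using hv
      subst hvw
      simp [edgeVec, hmem.1, hmem.2]
    intro f hf
    exact hle hf w (by simp)
  -- `W' ≤ W`
  have hijW : edgeVec q i j ∈ W := by
    rw [edgeVec_combo q w i j hwi hwj hij
      (by rw [hqw, hq j (Ne.symm hwj), hq i (Ne.symm hwi)])]
    exact sub_mem (smul_mem _ _ hu1) hu3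
  have hW'W : W' ≤ W := by
    rw [hW', span_le]
    rintro f ⟨a, b, hab, rfl⟩
    rcases hsub _ hab with h | h
    · exact subset_span ⟨a, b, h, rfl⟩
    · rw [Sym2.eq_iff] at h
      rcases h with ⟨rfl, rfl⟩ | ⟨rfl, rfl⟩
      · exact hijW
      · rw [edgeVec_swap]
        exact hijW
  have hBW : B ≤ W := by
    rw [hB, span_le]
    rintro f hf
    simp only [Set.mem_insert_iff, Set.mem_singleton_iff] at hf
    rcases hf with rfl | rfl
    · exact hu1
    · exact hu2
  -- `W' ⊓ B = ⊥`
  have hinf : W' ⊓ B = ⊥ := by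
    rw [eq_bot_iff]
    intro f hf
    rw [Submodule.mem_inf] at hf
    obtain ⟨hf1, hf2⟩ := hf
    rw [hB, Submodule.mem_span_pair] at hf2
    obtain ⟨a, b, rfl⟩ := hf2
    have h0 : a • (x - p i) + b • (x - p k) = 0 := by
      have := hvan _ hf1
      simpa [Pi.add_apply, Pi.smul_apply, hu1w, hu2w] using this
    obtain ⟨ha, hb⟩ := haux a b h0
    simp [ha, hb]
  -- `2 ≤ finrank B`
  have hli : LinearIndependent ℝ ![edgeVec q w i, edgeVec q w k] := by
    rw [LinearIndependent.pair_iff]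
    intro a b hab
    have h0 : a • (x - p i) + b • (x - p k) = 0 := by
      have := congrArg (fun f => f w) hab
      simpa [Pi.add_apply, Pi.smul_apply, hu1w, hu2w] using this
    exact haux a b h0
  have hrankB : finrank ℝ B = 2 := by
    have h := finrank_span_eq_card hli
    rw [Matrix.range_cons_cons_empty] at h
    rw [hB, h]
    simp
  -- rank counting
  have hsup : finrank ℝ ↥(W' ⊔ B) = finrank ℝ W' + finrank ℝ B := by
    have h := Submodule.finrank_sup_add_finrank_inf_eq W' B
    rw [hinf] at h
    simpa using h
  have hfinal : finrank ℝ W' + 2 ≤ finrank ℝ W := by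
    calc finrank ℝ W' + 2 = finrank ℝ ↥(W' ⊔ B) := by rw [hsup, hrankB]
    _ ≤ finrank ℝ W := Submodule.finrank_mono (sup_le hW'W hBW)
  -- translate back
  have hset : edgeVecs q F' = edgeVecs p F' := by
    ext f
    constructor <;> rintro ⟨a, b, hab, rfl⟩ <;> refine ⟨a, b, hab, ?_⟩ <;>
      (have hmem := havoid _ hab; rw [Sym2.mem_iff] at hmem; push_neg at hmem)
    · exact edgeVec_congr p q a b (hq a (Ne.symm hmem.1)) (hq b (Ne.symm hmem.2))
    · exact (edgeVec_congr p q a b (hq a (Ne.symm hmem.1)) (hq b (Ne.symm hmem.2))).symm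
  have hr' : rankOf p F' = finrank ℝ W' := by
    rw [hW', hset]
    rfl
  have hrq : finrank ℝ W ≤ genRankSet F := rankOf_le_genRankSet q F
  omega

/-- Perturbation: there is a realization of maximal rank for `F'` in which `i`, `j`, `k`
are placed affinely independently. -/
lemma exists_good_realization (F' : Set (Sym2 V)) (i j k : V)
    (hij : i ≠ j) (hik : i ≠ k) (hjk : j ≠ k) :
    ∃ p : V → ℝ × ℝ, genRankSet F' ≤ rankOf p F' ∧
      (p j - p i).1 * (p k - p i).2 - (p j - p i).2 * (p k - p i).1 ≠ 0 := by
  classical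
  obtain ⟨p₀, hp₀⟩ := exists_rankOf_eq_genRankSet F'
  obtain ⟨b, hbS, hspan, hbind⟩ := exists_linearIndependent ℝ (edgeVecs p₀ F')
  have hbfin : b.Finite := hbind.setFinite
  haveI := hbfin.fintype
  have hcard : Fintype.card b = genRankSet F' := by
    rw [← hp₀]
    unfold rankOf
    rw [← hspan, finrank_span_set_eq_card hbind, Set.toFinset_card]
  have hchoice : ∀ m : b, ∃ a c : V, s(a, c) ∈ F' ∧ (m : V → ℝ × ℝ) = edgeVec p₀ a c :=
    fun m => hbS m.2
  choose A C hAC hval using hchoice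
  set c : V → ℝ × ℝ := fun v => if v = j then ((1 : ℝ), (0 : ℝ)) else
    if v = k then ((0 : ℝ), (1 : ℝ)) else 0 with hc
  set Φ : ℝ → b → (V → ℝ × ℝ) := fun ε m => edgeVec (p₀ + ε • c) (A m) (C m) with hΦ
  have hΦ0 : Φ 0 = (Subtype.val : b → V → ℝ × ℝ) := by
    funext m
    show edgeVec (p₀ + (0 : ℝ) • c) (A m) (C m) = ↑m
    simp only [zero_smul, add_zero]
    exact (hval m).symm
  have hcont : Continuous Φ := by
    apply continuous_pi
    intro m
    have heq : (fun ε : ℝ => Φ ε m)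
        = fun ε : ℝ => edgeVec p₀ (A m) (C m) + ε • edgeVec c (A m) (C m) := by
      funext ε
      rw [hΦ]
      exact edgeVec_smul_add p₀ c ε (A m) (C m)
    rw [heq]
    exact continuous_const.add (continuous_id.smul continuous_const)
  have hopen : IsOpen {ε : ℝ | LinearIndependent ℝ (Φ ε)} :=
    isOpen_setOf_linearIndependent.preimage hcont
  have h0mem : (0 : ℝ) ∈ {ε : ℝ | LinearIndependent ℝ (Φ ε)} := by
    rw [Set.mem_setOf_eq, hΦ0]
    exact hbind
  obtain ⟨δ, hδ, hball⟩ := Metric.isOpen_iff.mp hopen 0 h0mem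
  obtain ⟨ε, hεball, hεne⟩ : ∃ ε ∈ Metric.ball (0 : ℝ) δ,
      ε ^ 2 + ((p₀ j - p₀ i).1 + (p₀ k - p₀ i).2) * ε
        + ((p₀ j - p₀ i).1 * (p₀ k - p₀ i).2 - (p₀ j - p₀ i).2 * (p₀ k - p₀ i).1) ≠ 0 := by
    by_contra hcon
    push_neg at hcon
    have m1 : δ / 4 ∈ Metric.ball (0 : ℝ) δ := by
      rw [Real.ball_eq_Ioo, Set.mem_Ioo]
      constructor <;> linarith
    have m2 : δ / 2 ∈ Metric.ball (0 : ℝ) δ := by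
      rw [Real.ball_eq_Ioo, Set.mem_Ioo]
      constructor <;> linarith
    have m3 : 3 * δ / 4 ∈ Metric.ball (0 : ℝ) δ := by
      rw [Real.ball_eq_Ioo, Set.mem_Ioo]
      constructor <;> linarith
    have e1 := hcon _ m1
    have e2 := hcon _ m2
    have e3 := hcon _ m3
    nlinarith [mul_pos hδ hδ]
  refine ⟨p₀ + ε • c, ?_, ?_⟩
  · have hli : LinearIndependent ℝ (Φ ε) := hball hεball
    rw [← hcard]
    set W : Submodule ℝ (V → ℝ × ℝ) := span ℝ (edgeVecs (p₀ + ε • c) F') with hWdef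
    have hmem : ∀ m : b, Φ ε m ∈ W := fun m => subset_span ⟨A m, C m, hAC m, by rw [hΦ]⟩
    have hli' : LinearIndependent ℝ (fun m : b => (⟨Φ ε m, hmem m⟩ : W)) := by
      apply LinearIndependent.of_comp W.subtype
      convert hli using 1
      rfl
    exact hli'.fintype_card_le_finrank
  · have hci : c i = 0 := by simp [hc, hij, hik]
    have hcj : c j = ((1 : ℝ), (0 : ℝ)) := by simp [hc]
    have hck : c k = ((0 : ℝ), (1 : ℝ)) := by simp [hc, Ne.symm hjk]
    simp only [Pi.add_apply, Pi.smul_apply, hci, hcj, hck, smul_zero, add_zero]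
    intro hcontra
    apply hεne
    simp only [Prod.fst_sub, Prod.snd_sub, Prod.fst_add, Prod.snd_add, Prod.smul_fst,
      Prod.smul_snd, smul_eq_mul] at hcontra
    simp only [Prod.fst_sub, Prod.snd_sub]
    linear_combination hcontra

end AuxLemmas

/-- If `w` is a vertex of degree exactly 4 with incident edges `{w,i}, {w,j}, {w,k}, {w,l}` and
`{i,j} ∉ E`, then for `G' = (V, (E ∪ {{i,j}}) \ {{w,i},{w,j},{w,k},{w,l}})` we have
`s(G) ≤ s(G') + 1`. -/
theorem genStress_le_one_extension_four {V : Type*} [Fintype V] (G : SimpleGraph V)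
    (w i j k l : V) (hi : G.Adj w i) (hj : G.Adj w j) (hk : G.Adj w k) (hl : G.Adj w l)
    (hij : i ≠ j) (hjk : j ≠ k) (hik : i ≠ k)
    (hil : i ≠ l) (hjl : j ≠ l) (hkl : k ≠ l)
    (hdeg : Nat.card (G.neighborSet w) = 4)
    (hnadj : ¬ G.Adj i j) :
    genStress G ≤ genStress (SimpleGraph.fromEdgeSet
      ((G.edgeSet ∪ {s(i, j)}) \ {s(w, i), s(w, j), s(w, k), s(w, l)})) + 1 := by
  classical
  set T : Set (Sym2 V) := {s(w, i), s(w, j), s(w, k), s(w, l)} with hT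
  set E' : Set (Sym2 V) := (G.edgeSet ∪ {s(i, j)}) \ T with hE'
  have hwi : w ≠ i := hi.ne
  have hwj : w ≠ j := hj.ne
  have hwk : w ≠ k := hk.ne
  have hwl : w ≠ l := hl.ne
  -- the edge set of the modified graph is `E'`
  have hedge : (SimpleGraph.fromEdgeSet E').edgeSet = E' := by
    rw [SimpleGraph.edgeSet_fromEdgeSet, sdiff_eq_self_iff_disjoint]
    rw [Set.disjoint_left]
    rintro e he ⟨he1, _⟩
    rcases he1 with heE | heij
    · exact (SimpleGraph.not_isDiag_of_mem_edgeSet G heE) he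
    · rw [Set.mem_singleton_iff] at heij
      subst heij
      exact hij (Sym2.isDiag_iff_proj_eq.mp he)
  -- the neighborhood of `w`
  have hNbr : G.neighborSet w = {i, j, k, l} := by
    have hsub : ({i, j, k, l} : Set V) ⊆ G.neighborSet w := by
      intro v hv
      simp only [Set.mem_insert_iff, Set.mem_singleton_iff] at hv
      rcases hv with rfl | rfl | rfl | rfl
      · exact hi
      · exact hj
      · exact hk
      · exact hl
    have hc4 : ({i, j, k, l} : Set V).ncard = 4 := by
      rw [Set.ncard_insert_of_notMem (by simp [hij, hik, hil]),
        Set.ncard_insert_of_notMem (by simp [hjk, hjl]),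
        Set.ncard_insert_of_notMem (by simp [hkl]), Set.ncard_singleton]
    have hNc : (G.neighborSet w).ncard = 4 := by
      rw [← Nat.card_coe_set_eq]
      exact hdeg
    exact (Set.eq_of_subset_of_ncard_le hsub (by rw [hNc, hc4]) (Set.toFinite _)).symm
  -- no edge of `E'` contains `w`
  have havoid : ∀ e ∈ E', w ∉ e := by
    rintro e ⟨he1, he2⟩ hwe
    rcases he1 with heE | heij
    · have hspec := Sym2.other_spec hwe
      rw [← hspec] at heE
      have hadj : G.Adj w (Sym2.Mem.other hwe) := G.mem_edgeSet.mp heE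
      have hmem : Sym2.Mem.other hwe ∈ G.neighborSet w := hadj
      rw [hNbr] at hmem
      apply he2
      rw [← hspec]
      simp only [hT, Set.mem_insert_iff, Set.mem_singleton_iff] at hmem ⊢
      rcases hmem with rfl | rfl | rfl | rfl
      · exact Or.inl rfl
      · exact Or.inr (Or.inl rfl)
      · exact Or.inr (Or.inr (Or.inl rfl))
      · exact Or.inr (Or.inr (Or.inr rfl))
    · rw [Set.mem_singleton_iff] at heij
      subst heij
      rw [Sym2.mem_iff] at hwe
      rcases hwe with rfl | rfl
      · exact hwi rfl
      · exact hwj rfl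
  have hsub' : ∀ e ∈ E', e ∈ G.edgeSet ∨ e = s(i, j) := by
    rintro e ⟨he1, -⟩
    rcases he1 with heE | heij
    · exact Or.inl heE
    · exact Or.inr heij
  -- the rank inequality
  have hrank : genRankSet E' + 2 ≤ genRankSet G.edgeSet := by
    obtain ⟨p, hp1, hp2⟩ := exists_good_realization E' i j k hij hik hjk
    have hkey := rank_key G.edgeSet E' w i j k p hwi hwj hwk hij havoid hsub'
      (G.mem_edgeSet.mpr hi) (G.mem_edgeSet.mpr hj) (G.mem_edgeSet.mpr hk) hp2
    omega
  -- cardinalities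
  have hsijE : s(i, j) ∉ G.edgeSet := fun h => hnadj (G.mem_edgeSet.mp h)
  have hTsub : T ⊆ G.edgeSet := by
    intro e he
    simp only [hT, Set.mem_insert_iff, Set.mem_singleton_iff] at he
    rcases he with rfl | rfl | rfl | rfl
    · exact G.mem_edgeSet.mpr hi
    · exact G.mem_edgeSet.mpr hj
    · exact G.mem_edgeSet.mpr hk
    · exact G.mem_edgeSet.mpr hl
  have hTcard : T.ncard = 4 := by
    have h12 : s(w, i) ≠ s(w, j) := by simp [Sym2.eq_iff, hij, hwj, hwi]
    have h13 : s(w, i) ≠ s(w, k) := by simp [Sym2.eq_iff, hik, hwk, hwi]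
    have h14 : s(w, i) ≠ s(w, l) := by simp [Sym2.eq_iff, hil, hwl, hwi]
    have h23 : s(w, j) ≠ s(w, k) := by simp [Sym2.eq_iff, hjk, hwk, hwj]
    have h24 : s(w, j) ≠ s(w, l) := by simp [Sym2.eq_iff, hjl, hwl, hwj]
    have h34 : s(w, k) ≠ s(w, l) := by simp [Sym2.eq_iff, hkl, hwl, hwk]
    rw [hT, Set.ncard_insert_of_notMem (by simp [h12, h13, h14]),
      Set.ncard_insert_of_notMem (by simp [h23, h24]),
      Set.ncard_insert_of_notMem (by simp [h34]), Set.ncard_singleton]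
  have hEU : (G.edgeSet ∪ {s(i, j)}).ncard = G.edgeSet.ncard + 1 := by
    rw [Set.union_singleton, Set.ncard_insert_of_notMem hsijE]
  have hE'card : E'.ncard = G.edgeSet.ncard + 1 - 4 := by
    rw [hE', Set.ncard_diff (hTsub.trans Set.subset_union_left), hTcard, hEU]
  have hE4 : 4 ≤ G.edgeSet.ncard := by
    rw [← hTcard]
    exact Set.ncard_le_ncard hTsub (Set.toFinite _)
  -- conclusion
  show G.edgeSet.ncard - genRankSet G.edgeSet
    ≤ (SimpleGraph.fromEdgeSet E').edgeSet.ncard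
      - genRankSet (SimpleGraph.fromEdgeSet E').edgeSet + 1
  rw [hedge]
  omega
end
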